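/- Let G be a finite simple graph on n vertices with ppt(G) = n − 3 and γ_P(G) ∈ {2,3} (where ppt = ppt_1 and γ_P = γ_{P,1}). Then G is isomorphic to one of: the empty graph on 3 vertices, the disjoint union of the empty graph on 2 vertices with K_2, K_1 ⊔ C_3, K_1 ⊔ P_3, K_1 ⊔ P_4, K_1 ⊔ C_4, or K_2 ⊔ K_2. -/

import Mathlib

set_option linter.unusedSectionVars false
set_option maxHeartbeats 1000000

namespace PowerProp

open SimpleGraph

variable {V : Type*} {α β : Type*}

/-- The closed neighborhood `N[S]` of a set of vertices. -/
def closedNbhd (G : SimpleGraph V) (S : Set V) : Set V :=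
  S ∪ ⋃ v ∈ S, G.neighborSet v

/-- One propagation step of the `k`-power domination process. -/
def propStep (k : ℕ) (G : SimpleGraph V) (S : Set V) : Set V :=
  S ∪ {w | ∃ v ∈ S, w ∈ G.neighborSet v \ S ∧ (G.neighborSet v \ S).ncard ≤ k}

/-- `S^[t]`: the set observed after `t` steps (step 1 is the domination step). -/
def powerIter (k : ℕ) (G : SimpleGraph V) (S : Set V) : ℕ → Set V
  | 0 => S
  | 1 => closedNbhd G S
  | (t + 2) => propStep k G (powerIter k G S (t + 1))

/-- `S` is a `k`-power dominating set of `G`. -/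
def IsPDS (k : ℕ) (G : SimpleGraph V) (S : Set V) : Prop :=
  ∃ l, powerIter k G S l = Set.univ

/-- The `k`-power domination number `γ_{P,k}(G)`. -/
noncomputable def pdNum (k : ℕ) (G : SimpleGraph V) : ℕ :=
  sInf {n | ∃ S : Set V, S.ncard = n ∧ IsPDS k G S}

/-- `S` is a minimum `k`-power dominating set of `G`. -/
def IsMinPDS (k : ℕ) (G : SimpleGraph V) (S : Set V) : Prop :=
  IsPDS k G S ∧ S.ncard = pdNum k G

/-- `ppt_k(G,S)`, the `k`-power propagation time of `G` with `S`. -/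
noncomputable def pptOf (k : ℕ) (G : SimpleGraph V) (S : Set V) : ℕ :=
  sInf {l | powerIter k G S l = Set.univ}

/-- `ppt_k(G)`, the (minimum) `k`-power propagation time of `G`. -/
noncomputable def ppt (k : ℕ) (G : SimpleGraph V) : ℕ :=
  sInf {t | ∃ S : Set V, IsMinPDS k G S ∧ pptOf k G S = t}

/-! ### Basic lemmas -/

variable [Fintype V] {k : ℕ} {G : SimpleGraph V} {S T A B : Set V}

lemma subset_closedNbhd : S ⊆ closedNbhd G S := Set.subset_union_left

lemma subset_propStep : S ⊆ propStep k G S := Set.subset_union_left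

lemma closedNbhd_mono (h : A ⊆ B) : closedNbhd G A ⊆ closedNbhd G B := by
  apply Set.union_subset_union h
  exact Set.iUnion₂_subset fun v hv => Set.subset_iUnion₂ (s := fun v _ => G.neighborSet v) v (h hv)

lemma propStep_mono (h : A ⊆ B) : propStep k G A ⊆ propStep k G B := by
  rintro w (hw | ⟨v, hv, hw, hcard⟩)
  · exact Or.inl (h hw)
  · by_cases hwB : w ∈ B
    · exact Or.inl hwB
    · refine Or.inr ⟨v, h hv, ⟨hw.1, hwB⟩, le_trans (Set.ncard_le_ncard ?_ ((G.neighborSet v).toFinite.diff)) hcard⟩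
      exact Set.diff_subset_diff_right h

lemma mem_closedNbhd_of_adj {u v : V} (hu : u ∈ S) (h : G.Adj u v) : v ∈ closedNbhd G S :=
  Or.inr (Set.mem_biUnion hu h)

lemma closedNbhd_univ : closedNbhd G Set.univ = Set.univ :=
  Set.eq_univ_of_subset subset_closedNbhd rfl

lemma propStep_univ : propStep k G Set.univ = Set.univ :=
  Set.eq_univ_of_subset subset_propStep rfl

lemma powerIter_succ (t : ℕ) (ht : 1 ≤ t) :
    powerIter k G S (t + 1) = propStep k G (powerIter k G S t) :=
  match t, ht with
  | (_ + 1), _ => rfl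

lemma powerIter_subset_succ (t : ℕ) : powerIter k G S t ⊆ powerIter k G S (t + 1) := by
  match t with
  | 0 => exact subset_closedNbhd
  | (t+1) => exact subset_propStep

lemma powerIter_mono_t {t t' : ℕ} (h : t ≤ t') : powerIter k G S t ⊆ powerIter k G S t' := by
  induction t' with
  | zero => simpa [Nat.le_zero.mp h]
  | succ n ih =>
    rcases Nat.lt_or_ge t (n+1) with h' | h'
    · exact (ih (Nat.lt_succ_iff.mp h')).trans (powerIter_subset_succ n)
    · have : t = n + 1 := le_antisymm h h'
      simp [this]

lemma powerIter_univ_of_le {t t' : ℕ} (h : t ≤ t') (hu : powerIter k G S t = Set.univ) :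
    powerIter k G S t' = Set.univ :=
  Set.eq_univ_of_subset (hu ▸ powerIter_mono_t h) rfl

lemma powerIter_mono_S {t : ℕ} (ht : 1 ≤ t) (h : powerIter k G S 1 ⊆ powerIter k G T 1) :
    powerIter k G S t ⊆ powerIter k G T t := by
  induction t with
  | zero => omega
  | succ n ih =>
    rcases Nat.lt_or_ge 1 (n+1) with h' | h'
    · have hn : 1 ≤ n := by omega
      calc powerIter k G S (n + 1) = propStep k G (powerIter k G S n) := powerIter_succ n hn
        _ ⊆ propStep k G (powerIter k G T n) := propStep_mono (ih hn)
        _ = powerIter k G T (n+1) := (powerIter_succ n hn).symm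
    · have hn0 : n = 0 := by omega
      subst hn0; exact h

/-- The key exchange lemma: if `T`'s process at time `m` contains `S`'s process at
time `m+1`, then the containment persists. -/
lemma powerIter_shift {m : ℕ} (hm : 1 ≤ m)
    (h : powerIter k G S (m + 1) ⊆ powerIter k G T m) {t : ℕ} (ht : m ≤ t) :
    powerIter k G S (t + 1) ⊆ powerIter k G T t := by
  induction t with
  | zero => omega
  | succ n ih =>
    rcases Nat.lt_or_ge m (n+1) with h' | h'
    · have hn : m ≤ n := by omega
      have h1n : 1 ≤ n := le_trans hm hn
      calc powerIter k G S (n + 1 + 1) = propStep k G (powerIter k G S (n+1)) :=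
            powerIter_succ (n+1) (by omega)
        _ ⊆ propStep k G (powerIter k G T n) := propStep_mono (ih hn)
        _ = powerIter k G T (n+1) := (powerIter_succ n h1n).symm
    · have : m = n + 1 := le_antisymm ht h'
      subst this
      exact h


/-! ### Spec lemmas -/

lemma IsPDS.powerIter_pptOf (h : IsPDS k G S) : powerIter k G S (pptOf k G S) = Set.univ :=
  Nat.sInf_mem h

lemma pptOf_le {l : ℕ} (h : powerIter k G S l = Set.univ) : pptOf k G S ≤ l :=
  Nat.sInf_le h

lemma powerIter_ne_univ_of_lt {t : ℕ} (h : t < pptOf k G S) : powerIter k G S t ≠ Set.univ :=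
  fun hu => absurd (pptOf_le hu) (by omega)

lemma isPDS_univ : IsPDS k G (Set.univ : Set V) := ⟨0, rfl⟩

lemma pdNum_le_of_isPDS (h : IsPDS k G S) : pdNum k G ≤ S.ncard :=
  Nat.sInf_le ⟨S, rfl, h⟩

lemma exists_minPDS : ∃ S : Set V, IsMinPDS k G S := by
  have hne : {n | ∃ S : Set V, S.ncard = n ∧ IsPDS k G S}.Nonempty :=
    ⟨_, Set.univ, rfl, isPDS_univ⟩
  obtain ⟨S, hS, hPDS⟩ := Nat.sInf_mem hne
  exact ⟨S, hPDS, hS⟩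

lemma exists_minPDS_ppt : ∃ S : Set V, IsMinPDS k G S ∧ pptOf k G S = ppt k G := by
  have hne : {t | ∃ S : Set V, IsMinPDS k G S ∧ pptOf k G S = t}.Nonempty := by
    obtain ⟨S, hS⟩ := exists_minPDS (k := k) (G := G)
    exact ⟨pptOf k G S, S, hS, rfl⟩
  exact Nat.sInf_mem hne

lemma ppt_le_pptOf (h : IsMinPDS k G S) : ppt k G ≤ pptOf k G S :=
  Nat.sInf_le ⟨S, h, rfl⟩

/-- If the process stalls, it stays stalled. -/
lemma powerIter_strict_growth (hS : IsPDS k G S) {t : ℕ} (ht : t < pptOf k G S) :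
    powerIter k G S t ⊂ powerIter k G S (t + 1) := by
  refine (Set.ssubset_iff_of_subset (powerIter_subset_succ t)).mpr ?_
  by_contra hno
  push_neg at hno
  have heq : powerIter k G S (t + 1) = powerIter k G S t := by
    apply Set.Subset.antisymm _ (powerIter_subset_succ t)
    intro x hx
    by_contra hxt
    exact hxt (hno x hx)
  -- then all later iterates are equal
  have hall : ∀ s, t ≤ s → powerIter k G S s = powerIter k G S t := by
    intro s hs
    induction s with
    | zero => rw [Nat.le_zero.mp hs]
    | succ n ih =>
      rcases Nat.lt_or_ge t (n+1) with h' | h'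
      · have hn : t ≤ n := by omega
        have hIH := ih hn
        rcases Nat.eq_or_lt_of_le hn with rfl | hlt
        · exact heq
        · have h1n : 1 ≤ n := by
            rcases Nat.eq_zero_or_pos n with rfl | h; · omega
            · exact h
          rw [powerIter_succ n h1n, hIH]
          rcases Nat.eq_zero_or_pos t with rfl | htpos
          · -- t = 0 : powerIter 0 = S ; propStep S : closedNbhd S = S
            have h10 : powerIter k G S 1 = powerIter k G S 0 := heq
            have hsub : propStep k G (powerIter k G S 0) ⊆ powerIter k G S 0 := by
              rintro w (hw | ⟨v, hv, hw, hcard⟩)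
              · exact hw
              · exfalso
                have : w ∈ closedNbhd G S := mem_closedNbhd_of_adj hv hw.1
                rw [show closedNbhd G S = powerIter k G S 1 from rfl, h10] at this
                exact hw.2 this
            exact Set.Subset.antisymm hsub subset_propStep
          · have := powerIter_succ t htpos (k := k) (G := G) (S := S)
            rw [heq] at this
            rw [← this]
      · have : t = n + 1 := le_antisymm hs h'
        rw [this]
  have := hS.powerIter_pptOf
  rw [hall (pptOf k G S) (by omega)] at this
  exact powerIter_ne_univ_of_lt (show t < pptOf k G S from ht) this

lemma ncard_powerIter_lower (hS : IsPDS k G S) {t : ℕ} (ht : t ≤ pptOf k G S) :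
    S.ncard + t ≤ (powerIter k G S t).ncard := by
  induction t with
  | zero => simp [powerIter]
  | succ n ih =>
    have h1 := ih (by omega)
    have h2 : (powerIter k G S n).ncard < (powerIter k G S (n+1)).ncard :=
      Set.ncard_lt_ncard (powerIter_strict_growth hS (by omega)) (Set.toFinite _)
    omega

lemma ncard_powerIter_mono {t t' : ℕ} (h : t ≤ t') :
    (powerIter k G S t).ncard ≤ (powerIter k G S t').ncard :=
  Set.ncard_le_ncard (powerIter_mono_t h) (Set.toFinite _)

lemma ncard_powerIter_lower' (hS : IsPDS k G S) {t t' : ℕ} (ht : t ≤ t') (ht' : t' ≤ pptOf k G S) :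
    (powerIter k G S t).ncard + (t' - t) ≤ (powerIter k G S t').ncard := by
  obtain ⟨d, rfl⟩ := Nat.exists_eq_add_of_le ht
  induction d with
  | zero => simp
  | succ n ih =>
    have h1 := ih (by omega) (by omega)
    have h2 : (powerIter k G S (t+n)).ncard < (powerIter k G S (t+n+1)).ncard :=
      Set.ncard_lt_ncard (powerIter_strict_growth hS (by omega)) (Set.toFinite _)
    have : t + (n+1) = t + n + 1 := by omega
    rw [this]
    omega

/-- Exchange: if `T`'s iterate at time `m ≥ 1` contains `S`'s iterate at time `m+1`,
then `T` is also a PDS and is at least one step faster (or done by `m`). -/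
lemma exchange (hS : IsPDS k G S) {m : ℕ} (hm : 1 ≤ m)
    (h : powerIter k G S (m + 1) ⊆ powerIter k G T m) :
    IsPDS k G T ∧ pptOf k G T ≤ max m (pptOf k G S - 1) := by
  rcases le_or_gt (pptOf k G S) (m+1) with hr | hr
  · have : powerIter k G S (m+1) = Set.univ := powerIter_univ_of_le hr hS.powerIter_pptOf
    have hTu : powerIter k G T m = Set.univ := Set.eq_univ_of_subset (this ▸ h) rfl
    exact ⟨⟨m, hTu⟩, le_trans (pptOf_le hTu) (le_max_left _ _)⟩
  · have hstep : powerIter k G S (pptOf k G S - 1 + 1) ⊆ powerIter k G T (pptOf k G S - 1) :=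
      powerIter_shift hm h (by omega)
    have : pptOf k G S - 1 + 1 = pptOf k G S := by omega
    rw [this, hS.powerIter_pptOf] at hstep
    have hTu : powerIter k G T (pptOf k G S - 1) = Set.univ := Set.eq_univ_of_subset hstep rfl
    exact ⟨⟨_, hTu⟩, le_trans (pptOf_le hTu) (le_max_right _ _)⟩

/-- Membership extraction from a propagation step. -/
lemma exists_spreader {t : ℕ} (ht : 1 ≤ t) {w : V}
    (hw : w ∈ powerIter k G S (t + 1)) (hw' : w ∉ powerIter k G S t) :
    ∃ v ∈ powerIter k G S t, w ∈ G.neighborSet v \ powerIter k G S t ∧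
      (G.neighborSet v \ powerIter k G S t).ncard ≤ k := by
  rw [powerIter_succ t ht] at hw
  rcases hw with hw | hw
  · exact absurd hw hw'
  · exact hw

lemma mem_propStep_of (hA : A = powerIter k G S t) (ht : 1 ≤ t) {w v : V} (hv : v ∈ A)
    (hadj : G.Adj v w) (hcard : (G.neighborSet v \ A).ncard ≤ k) :
    w ∈ powerIter k G S (t + 1) := by
  subst hA
  rw [powerIter_succ t ht]
  by_cases hwA : w ∈ powerIter k G S t
  · exact Or.inl hwA
  · exact Or.inr ⟨v, hv, ⟨hadj, hwA⟩, hcard⟩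

lemma ncard_le_one_of_subset_singleton {x : V} (h : A ⊆ {x}) : A.ncard ≤ 1 := by
  have := Set.ncard_le_ncard h (Set.finite_singleton x)
  simpa using this

lemma eq_singleton_of_ncard_le_one {x : V} (hx : x ∈ A) (h : A.ncard ≤ 1) : A = {x} := by
  have h1 : 0 < A.ncard := (Set.ncard_pos (Set.toFinite _)).mpr ⟨x, hx⟩
  have := Set.ncard_eq_one.mp (le_antisymm h h1)
  obtain ⟨y, rfl⟩ := this
  simp_all

/-- Extract the single new vertex when the cardinality grows by one. -/
lemma exists_new_vertex (hsub : A ⊆ B) (hcard : B.ncard = A.ncard + 1) :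
    ∃ x, x ∉ A ∧ B = insert x A := by
  have hd : (B \ A).ncard = 1 := by
    rw [Set.ncard_diff hsub (Set.toFinite _), hcard]; omega
  obtain ⟨x, hx⟩ := Set.ncard_eq_one.mp hd
  have hxBA : x ∈ B \ A := by rw [hx]; exact rfl
  refine ⟨x, hxBA.2, ?_⟩
  · apply Set.Subset.antisymm
    · intro b hb
      by_cases hbA : b ∈ A
      · exact Set.mem_insert_of_mem _ hbA
      · have : b ∈ B \ A := ⟨hb, hbA⟩
        rw [hx] at this
        simp_all
    · intro b hb
      rcases hb with rfl | hb
      · exact hxBA.1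
      · exact hsub hb


/-! ### Isomorphism helpers -/

lemma nonempty_iso_of_map {W : Type*} (X : SimpleGraph W) (f : W → V)
    (hinj : Function.Injective f) (hsurj : Function.Surjective f)
    (hadj : ∀ i j, G.Adj (f i) (f j) ↔ X.Adj i j) : Nonempty (G ≃g X) := by
  refine ⟨(⟨Equiv.ofBijective f ⟨hinj, hsurj⟩, ?_⟩ : X ≃g G).symm⟩
  intro i j
  exact hadj i j


/-! ### More helpers -/

lemma neighborSet_subset_powerIter_one {v : V} (hv : v ∈ S) :
    G.neighborSet v ⊆ powerIter k G S 1 :=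
  fun _ hw => mem_closedNbhd_of_adj hv hw

lemma subset_powerIter_one : S ⊆ powerIter k G S 1 := subset_closedNbhd

lemma mem_powerIter_one_of_adj {u v : V} (hu : u ∈ S) (h : G.Adj u v) :
    v ∈ powerIter k G S 1 :=
  mem_closedNbhd_of_adj hu h

lemma mem_closedNbhd_iff {w : V} :
    w ∈ closedNbhd G S ↔ w ∈ S ∨ ∃ v ∈ S, G.Adj v w := by
  simp [closedNbhd, SimpleGraph.neighborSet]

lemma iso_bot3 (hcard : Fintype.card V = 3) (hno : ∀ u v : V, ¬ G.Adj u v) :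
    Nonempty (G ≃g (⊥ : SimpleGraph (Fin 3))) := by
  classical
  refine ⟨⟨Fintype.equivFinOfCardEq hcard, ?_⟩⟩
  intro a b
  simp [hno a b]

lemma iso_O2K2 (s1 : V) (s2 : V) (u : V) (v : V)
    (huniv : (Set.univ : Set V) = {s1, s2, u, v})
    (hd0 : s1 ≠ s2) (hd1 : s1 ≠ u) (hd2 : s1 ≠ v) (hd3 : s2 ≠ u) (hd4 : s2 ≠ v) (hd5 : u ≠ v) (a0 : G.Adj u v) (n0 : ¬ G.Adj s1 s2) (n1 : ¬ G.Adj s1 u) (n2 : ¬ G.Adj s1 v) (n3 : ¬ G.Adj s2 u) (n4 : ¬ G.Adj s2 v) :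
    Nonempty (G ≃g (⊥ : SimpleGraph (Fin 2)) ⊕g completeGraph (Fin 2)) := by
  have a0' := a0.symm
  have n0' : ¬ G.Adj s2 s1 := fun h => n0 h.symm
  have n1' : ¬ G.Adj u s1 := fun h => n1 h.symm
  have n2' : ¬ G.Adj v s1 := fun h => n2 h.symm
  have n3' : ¬ G.Adj u s2 := fun h => n3 h.symm
  have n4' : ¬ G.Adj v s2 := fun h => n4 h.symm
  apply nonempty_iso_of_map _ (fun i => match i with
    | Sum.inl 0 => s1
    | Sum.inl 1 => s2
    | Sum.inr 0 => u
    | Sum.inr 1 => v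
    )
  · rintro (i | i) (j | j) hij <;> fin_cases i <;> fin_cases j <;> simp_all
  · intro v0
    have hv : v0 ∈ ({s1, s2, u, v} : Set V) := huniv ▸ Set.mem_univ v0
    rcases hv with rfl | rfl | rfl | rfl
    · exact ⟨Sum.inl 0, rfl⟩
    · exact ⟨Sum.inl 1, rfl⟩
    · exact ⟨Sum.inr 0, rfl⟩
    · exact ⟨Sum.inr 1, rfl⟩
  · rintro (i | i) (j | j) <;> fin_cases i <;> fin_cases j <;>
      simp_all [pathGraph_adj, completeGraph, cycleGraph, circulantGraph] <;> decide

lemma iso_K1C3 (w : V) (p : V) (q : V) (r : V)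
    (huniv : (Set.univ : Set V) = {w, p, q, r})
    (hd0 : w ≠ p) (hd1 : w ≠ q) (hd2 : w ≠ r) (hd3 : p ≠ q) (hd4 : p ≠ r) (hd5 : q ≠ r) (a0 : G.Adj p q) (a1 : G.Adj p r) (a2 : G.Adj q r) (n0 : ¬ G.Adj w p) (n1 : ¬ G.Adj w q) (n2 : ¬ G.Adj w r) :
    Nonempty (G ≃g completeGraph (Fin 1) ⊕g cycleGraph 3) := by
  have a0' := a0.symm
  have a1' := a1.symm
  have a2' := a2.symm
  have n0' : ¬ G.Adj p w := fun h => n0 h.symm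
  have n1' : ¬ G.Adj q w := fun h => n1 h.symm
  have n2' : ¬ G.Adj r w := fun h => n2 h.symm
  apply nonempty_iso_of_map _ (fun i => match i with
    | Sum.inl 0 => w
    | Sum.inr 0 => p
    | Sum.inr 1 => q
    | Sum.inr 2 => r
    )
  · rintro (i | i) (j | j) hij <;> fin_cases i <;> fin_cases j <;> simp_all
  · intro v0
    have hv : v0 ∈ ({w, p, q, r} : Set V) := huniv ▸ Set.mem_univ v0
    rcases hv with rfl | rfl | rfl | rfl
    · exact ⟨Sum.inl 0, rfl⟩
    · exact ⟨Sum.inr 0, rfl⟩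
    · exact ⟨Sum.inr 1, rfl⟩
    · exact ⟨Sum.inr 2, rfl⟩
  · rintro (i | i) (j | j) <;> fin_cases i <;> fin_cases j <;>
      simp_all [pathGraph_adj, completeGraph, cycleGraph, circulantGraph] <;> decide

lemma iso_K1P3 (w : V) (p : V) (c : V) (q : V)
    (huniv : (Set.univ : Set V) = {w, p, c, q})
    (hd0 : w ≠ p) (hd1 : w ≠ c) (hd2 : w ≠ q) (hd3 : p ≠ c) (hd4 : p ≠ q) (hd5 : c ≠ q) (a0 : G.Adj c p) (a1 : G.Adj c q) (n0 : ¬ G.Adj w p) (n1 : ¬ G.Adj w c) (n2 : ¬ G.Adj w q) (n3 : ¬ G.Adj p q) :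
    Nonempty (G ≃g completeGraph (Fin 1) ⊕g pathGraph 3) := by
  have a0' := a0.symm
  have a1' := a1.symm
  have n0' : ¬ G.Adj p w := fun h => n0 h.symm
  have n1' : ¬ G.Adj c w := fun h => n1 h.symm
  have n2' : ¬ G.Adj q w := fun h => n2 h.symm
  have n3' : ¬ G.Adj q p := fun h => n3 h.symm
  apply nonempty_iso_of_map _ (fun i => match i with
    | Sum.inl 0 => w
    | Sum.inr 0 => p
    | Sum.inr 1 => c
    | Sum.inr 2 => q
    )
  · rintro (i | i) (j | j) hij <;> fin_cases i <;> fin_cases j <;> simp_all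
  · intro v0
    have hv : v0 ∈ ({w, p, c, q} : Set V) := huniv ▸ Set.mem_univ v0
    rcases hv with rfl | rfl | rfl | rfl
    · exact ⟨Sum.inl 0, rfl⟩
    · exact ⟨Sum.inr 0, rfl⟩
    · exact ⟨Sum.inr 1, rfl⟩
    · exact ⟨Sum.inr 2, rfl⟩
  · rintro (i | i) (j | j) <;> fin_cases i <;> fin_cases j <;>
      simp_all [pathGraph_adj, completeGraph, cycleGraph, circulantGraph] <;> decide

lemma iso_K1P4 (w : V) (c : V) (x1 : V) (x2 : V) (x3 : V)
    (huniv : (Set.univ : Set V) = {w, c, x1, x2, x3})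
    (hd0 : w ≠ c) (hd1 : w ≠ x1) (hd2 : w ≠ x2) (hd3 : w ≠ x3) (hd4 : c ≠ x1) (hd5 : c ≠ x2) (hd6 : c ≠ x3) (hd7 : x1 ≠ x2) (hd8 : x1 ≠ x3) (hd9 : x2 ≠ x3) (a0 : G.Adj c x1) (a1 : G.Adj c x2) (a2 : G.Adj x1 x3) (n0 : ¬ G.Adj w c) (n1 : ¬ G.Adj w x1) (n2 : ¬ G.Adj w x2) (n3 : ¬ G.Adj w x3) (n4 : ¬ G.Adj c x3) (n5 : ¬ G.Adj x1 x2) (n6 : ¬ G.Adj x2 x3) :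
    Nonempty (G ≃g completeGraph (Fin 1) ⊕g pathGraph 4) := by
  have a0' := a0.symm
  have a1' := a1.symm
  have a2' := a2.symm
  have n0' : ¬ G.Adj c w := fun h => n0 h.symm
  have n1' : ¬ G.Adj x1 w := fun h => n1 h.symm
  have n2' : ¬ G.Adj x2 w := fun h => n2 h.symm
  have n3' : ¬ G.Adj x3 w := fun h => n3 h.symm
  have n4' : ¬ G.Adj x3 c := fun h => n4 h.symm
  have n5' : ¬ G.Adj x2 x1 := fun h => n5 h.symm
  have n6' : ¬ G.Adj x3 x2 := fun h => n6 h.symm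
  apply nonempty_iso_of_map _ (fun i => match i with
    | Sum.inl 0 => w
    | Sum.inr 0 => x2
    | Sum.inr 1 => c
    | Sum.inr 2 => x1
    | Sum.inr 3 => x3
    )
  · rintro (i | i) (j | j) hij <;> fin_cases i <;> fin_cases j <;> simp_all
  · intro v0
    have hv : v0 ∈ ({w, c, x1, x2, x3} : Set V) := huniv ▸ Set.mem_univ v0
    rcases hv with rfl | rfl | rfl | rfl | rfl
    · exact ⟨Sum.inl 0, rfl⟩
    · exact ⟨Sum.inr 1, rfl⟩
    · exact ⟨Sum.inr 2, rfl⟩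
    · exact ⟨Sum.inr 0, rfl⟩
    · exact ⟨Sum.inr 3, rfl⟩
  · rintro (i | i) (j | j) <;> fin_cases i <;> fin_cases j <;>
      simp_all [pathGraph_adj, completeGraph, cycleGraph, circulantGraph] <;> decide

lemma iso_K1C4 (w : V) (c : V) (x1 : V) (x2 : V) (x3 : V)
    (huniv : (Set.univ : Set V) = {w, c, x1, x2, x3})
    (hd0 : w ≠ c) (hd1 : w ≠ x1) (hd2 : w ≠ x2) (hd3 : w ≠ x3) (hd4 : c ≠ x1) (hd5 : c ≠ x2) (hd6 : c ≠ x3) (hd7 : x1 ≠ x2) (hd8 : x1 ≠ x3) (hd9 : x2 ≠ x3) (a0 : G.Adj c x1) (a1 : G.Adj c x2) (a2 : G.Adj x1 x3) (a3 : G.Adj x2 x3) (n0 : ¬ G.Adj w c) (n1 : ¬ G.Adj w x1) (n2 : ¬ G.Adj w x2) (n3 : ¬ G.Adj w x3) (n4 : ¬ G.Adj c x3) (n5 : ¬ G.Adj x1 x2) :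
    Nonempty (G ≃g completeGraph (Fin 1) ⊕g cycleGraph 4) := by
  have a0' := a0.symm
  have a1' := a1.symm
  have a2' := a2.symm
  have a3' := a3.symm
  have n0' : ¬ G.Adj c w := fun h => n0 h.symm
  have n1' : ¬ G.Adj x1 w := fun h => n1 h.symm
  have n2' : ¬ G.Adj x2 w := fun h => n2 h.symm
  have n3' : ¬ G.Adj x3 w := fun h => n3 h.symm
  have n4' : ¬ G.Adj x3 c := fun h => n4 h.symm
  have n5' : ¬ G.Adj x2 x1 := fun h => n5 h.symm
  apply nonempty_iso_of_map _ (fun i => match i with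
    | Sum.inl 0 => w
    | Sum.inr 0 => c
    | Sum.inr 1 => x1
    | Sum.inr 2 => x3
    | Sum.inr 3 => x2
    )
  · rintro (i | i) (j | j) hij <;> fin_cases i <;> fin_cases j <;> simp_all
  · intro v0
    have hv : v0 ∈ ({w, c, x1, x2, x3} : Set V) := huniv ▸ Set.mem_univ v0
    rcases hv with rfl | rfl | rfl | rfl | rfl
    · exact ⟨Sum.inl 0, rfl⟩
    · exact ⟨Sum.inr 0, rfl⟩
    · exact ⟨Sum.inr 1, rfl⟩
    · exact ⟨Sum.inr 3, rfl⟩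
    · exact ⟨Sum.inr 2, rfl⟩
  · rintro (i | i) (j | j) <;> fin_cases i <;> fin_cases j <;>
      simp_all [pathGraph_adj, completeGraph, cycleGraph, circulantGraph] <;> decide

lemma iso_K2K2 (a : V) (x1 : V) (b : V) (x2 : V)
    (huniv : (Set.univ : Set V) = {a, x1, b, x2})
    (hd0 : a ≠ x1) (hd1 : a ≠ b) (hd2 : a ≠ x2) (hd3 : x1 ≠ b) (hd4 : x1 ≠ x2) (hd5 : b ≠ x2) (a0 : G.Adj a x1) (a1 : G.Adj b x2) (n0 : ¬ G.Adj a b) (n1 : ¬ G.Adj a x2) (n2 : ¬ G.Adj x1 b) (n3 : ¬ G.Adj x1 x2) :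
    Nonempty (G ≃g completeGraph (Fin 2) ⊕g completeGraph (Fin 2)) := by
  have a0' := a0.symm
  have a1' := a1.symm
  have n0' : ¬ G.Adj b a := fun h => n0 h.symm
  have n1' : ¬ G.Adj x2 a := fun h => n1 h.symm
  have n2' : ¬ G.Adj b x1 := fun h => n2 h.symm
  have n3' : ¬ G.Adj x2 x1 := fun h => n3 h.symm
  apply nonempty_iso_of_map _ (fun i => match i with
    | Sum.inl 0 => a
    | Sum.inl 1 => x1
    | Sum.inr 0 => b
    | Sum.inr 1 => x2
    )
  · rintro (i | i) (j | j) hij <;> fin_cases i <;> fin_cases j <;> simp_all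
  · intro v0
    have hv : v0 ∈ ({a, x1, b, x2} : Set V) := huniv ▸ Set.mem_univ v0
    rcases hv with rfl | rfl | rfl | rfl
    · exact ⟨Sum.inl 0, rfl⟩
    · exact ⟨Sum.inl 1, rfl⟩
    · exact ⟨Sum.inr 0, rfl⟩
    · exact ⟨Sum.inr 1, rfl⟩
  · rintro (i | i) (j | j) <;> fin_cases i <;> fin_cases j <;>
      simp_all [pathGraph_adj, completeGraph, cycleGraph, circulantGraph] <;> decide



/-! ### The conclusion predicate -/

def Concl (G : SimpleGraph V) : Prop :=
    Nonempty (G ≃g (⊥ : SimpleGraph (Fin 3))) ∨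
    Nonempty (G ≃g (⊥ : SimpleGraph (Fin 2)) ⊕g completeGraph (Fin 2)) ∨
    Nonempty (G ≃g completeGraph (Fin 1) ⊕g cycleGraph 3) ∨
    Nonempty (G ≃g completeGraph (Fin 1) ⊕g pathGraph 3) ∨
    Nonempty (G ≃g completeGraph (Fin 1) ⊕g pathGraph 4) ∨
    Nonempty (G ≃g completeGraph (Fin 1) ⊕g cycleGraph 4) ∨
    Nonempty (G ≃g completeGraph (Fin 2) ⊕g completeGraph (Fin 2))

/-! ### n = 4, γ = 2 case -/

lemma n4g2 (a b x1 x2 : V) (huniv4 : (Set.univ : Set V) = {a, b, x1, x2})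
    (hab : a ≠ b) (hx1a : x1 ≠ a) (hx1b : x1 ≠ b) (hx2a : x2 ≠ a) (hx2b : x2 ≠ b)
    (hx12 : x1 ≠ x2)
    (no1pds : ∀ v : V, ¬ IsPDS 1 G {v})
    (hx2nb : G.Adj a x2 ∨ G.Adj b x2)
    (hax1 : G.Adj a x1) : Concl G := by
  classical
  have hmem4 : ∀ y : V, y = a ∨ y = b ∨ y = x1 ∨ y = x2 := by
    intro y
    have hy : y ∈ ({a, b, x1, x2} : Set V) := by rw [← huniv4]; trivial
    simpa using hy
  by_cases hax2 : G.Adj a x2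
  · -- a has degree ≥ 2 ; show b is isolated
    have hnbx1 : ¬ G.Adj b x1 := by
      intro hadj
      refine no1pds a ⟨2, Set.eq_univ_iff_forall.mpr fun y => ?_⟩
      have hbmem : b ∈ powerIter 1 G {a} 2 := by
        refine mem_propStep_of rfl le_rfl (mem_powerIter_one_of_adj (Set.mem_singleton _) hax1) hadj.symm
          (ncard_le_one_of_subset_singleton (x := b) ?_)
        intro w hw
        rcases hmem4 w with hw' | hw' | hw' | hw' <;> rw [hw'] at hw ⊢
        · exact absurd (subset_powerIter_one (Set.mem_singleton _)) hw.2
        · rfl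
        · exact absurd hw.1 (G.loopless.irrefl x1)
        · exact absurd (mem_powerIter_one_of_adj (Set.mem_singleton _) hax2) hw.2
      rcases hmem4 y with hy' | hy' | hy' | hy' <;> rw [hy']
      · exact powerIter_subset_succ 1 (subset_powerIter_one (Set.mem_singleton _))
      · exact hbmem
      · exact powerIter_subset_succ 1 (mem_powerIter_one_of_adj (Set.mem_singleton _) hax1)
      · exact powerIter_subset_succ 1 (mem_powerIter_one_of_adj (Set.mem_singleton _) hax2)
    have hnbx2 : ¬ G.Adj b x2 := by
      intro hadj
      refine no1pds a ⟨2, Set.eq_univ_iff_forall.mpr fun y => ?_⟩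
      have hbmem : b ∈ powerIter 1 G {a} 2 := by
        refine mem_propStep_of rfl le_rfl (mem_powerIter_one_of_adj (Set.mem_singleton _) hax2) hadj.symm
          (ncard_le_one_of_subset_singleton (x := b) ?_)
        intro w hw
        rcases hmem4 w with hw' | hw' | hw' | hw' <;> rw [hw'] at hw ⊢
        · exact absurd (subset_powerIter_one (Set.mem_singleton _)) hw.2
        · rfl
        · exact absurd (mem_powerIter_one_of_adj (Set.mem_singleton _) hax1) hw.2
        · exact absurd hw.1 (G.loopless.irrefl x2)
      rcases hmem4 y with hy' | hy' | hy' | hy' <;> rw [hy']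
      · exact powerIter_subset_succ 1 (subset_powerIter_one (Set.mem_singleton _))
      · exact hbmem
      · exact powerIter_subset_succ 1 (mem_powerIter_one_of_adj (Set.mem_singleton _) hax1)
      · exact powerIter_subset_succ 1 (mem_powerIter_one_of_adj (Set.mem_singleton _) hax2)
    have hnab : ¬ G.Adj a b := by
      intro hadj
      refine no1pds a ⟨1, Set.eq_univ_iff_forall.mpr fun y => ?_⟩
      rcases hmem4 y with hy' | hy' | hy' | hy' <;> rw [hy']
      · exact subset_powerIter_one (Set.mem_singleton _)
      · exact mem_powerIter_one_of_adj (Set.mem_singleton _) hadj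
      · exact mem_powerIter_one_of_adj (Set.mem_singleton _) hax1
      · exact mem_powerIter_one_of_adj (Set.mem_singleton _) hax2
    by_cases hx1x2 : G.Adj x1 x2
    · refine Or.inr (Or.inr (Or.inl (iso_K1C3 b a x1 x2 ?_ (Ne.symm hab) (Ne.symm hx1b)
        (Ne.symm hx2b) (Ne.symm hx1a) (Ne.symm hx2a) hx12 hax1 hax2 hx1x2
        (fun h => hnab h.symm) hnbx1 hnbx2)))
      rw [huniv4]; ext y; simp; tauto
    · refine Or.inr (Or.inr (Or.inr (Or.inl (iso_K1P3 b x1 a x2 ?_ (Ne.symm hx1b)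
        (Ne.symm hab) (Ne.symm hx2b) hx1a hx12 (Ne.symm hx2a) hax1 hax2
        hnbx1 (fun h => hnab h.symm) hnbx2 hx1x2))))
      rw [huniv4]; ext y; simp; tauto
  · have hbx2 : G.Adj b x2 := hx2nb.resolve_left hax2
    have hnbx1 : ¬ G.Adj b x1 := by
      intro hadj
      refine no1pds b ⟨2, Set.eq_univ_iff_forall.mpr fun y => ?_⟩
      have hamem : a ∈ powerIter 1 G {b} 2 := by
        refine mem_propStep_of rfl le_rfl (mem_powerIter_one_of_adj (Set.mem_singleton _) hadj) hax1.symm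
          (ncard_le_one_of_subset_singleton (x := a) ?_)
        intro w hw
        rcases hmem4 w with hw' | hw' | hw' | hw' <;> rw [hw'] at hw ⊢
        · rfl
        · exact absurd (subset_powerIter_one (Set.mem_singleton _)) hw.2
        · exact absurd hw.1 (G.loopless.irrefl x1)
        · exact absurd (mem_powerIter_one_of_adj (Set.mem_singleton _) hbx2) hw.2
      rcases hmem4 y with hy' | hy' | hy' | hy' <;> rw [hy']
      · exact hamem
      · exact powerIter_subset_succ 1 (subset_powerIter_one (Set.mem_singleton _))
      · exact powerIter_subset_succ 1 (mem_powerIter_one_of_adj (Set.mem_singleton _) hadj)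
      · exact powerIter_subset_succ 1 (mem_powerIter_one_of_adj (Set.mem_singleton _) hbx2)
    have hnab : ¬ G.Adj a b := by
      intro hadj
      refine no1pds a ⟨2, Set.eq_univ_iff_forall.mpr fun y => ?_⟩
      have hx2mem : x2 ∈ powerIter 1 G {a} 2 := by
        refine mem_propStep_of rfl le_rfl (mem_powerIter_one_of_adj (Set.mem_singleton _) hadj) hbx2
          (ncard_le_one_of_subset_singleton (x := x2) ?_)
        intro w hw
        rcases hmem4 w with hw' | hw' | hw' | hw' <;> rw [hw'] at hw ⊢
        · exact absurd (subset_powerIter_one (Set.mem_singleton _)) hw.2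
        · exact absurd hw.1 (G.loopless.irrefl b)
        · exact absurd hw.1 hnbx1
        · rfl
      rcases hmem4 y with hy' | hy' | hy' | hy' <;> rw [hy']
      · exact powerIter_subset_succ 1 (subset_powerIter_one (Set.mem_singleton _))
      · exact powerIter_subset_succ 1 (mem_powerIter_one_of_adj (Set.mem_singleton _) hadj)
      · exact powerIter_subset_succ 1 (mem_powerIter_one_of_adj (Set.mem_singleton _) hax1)
      · exact hx2mem
    have hnx1x2 : ¬ G.Adj x1 x2 := by
      intro hadj
      refine no1pds x1 ⟨2, Set.eq_univ_iff_forall.mpr fun y => ?_⟩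
      have hbmem : b ∈ powerIter 1 G {x1} 2 := by
        refine mem_propStep_of rfl le_rfl (mem_powerIter_one_of_adj (Set.mem_singleton _) hadj) hbx2.symm
          (ncard_le_one_of_subset_singleton (x := b) ?_)
        intro w hw
        rcases hmem4 w with hw' | hw' | hw' | hw' <;> rw [hw'] at hw ⊢
        · exact absurd hw.1.symm hax2
        · rfl
        · exact absurd (subset_powerIter_one (Set.mem_singleton _)) hw.2
        · exact absurd hw.1 (G.loopless.irrefl x2)
      rcases hmem4 y with hy' | hy' | hy' | hy' <;> rw [hy']
      · exact powerIter_subset_succ 1 (mem_powerIter_one_of_adj (Set.mem_singleton _) hax1.symm)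
      · exact hbmem
      · exact powerIter_subset_succ 1 (subset_powerIter_one (Set.mem_singleton _))
      · exact powerIter_subset_succ 1 (mem_powerIter_one_of_adj (Set.mem_singleton _) hadj)
    refine Or.inr (Or.inr (Or.inr (Or.inr (Or.inr (Or.inr (iso_K2K2 a x1 b x2 ?_
      (Ne.symm hx1a) hab (Ne.symm hx2a) hx1b hx12 (Ne.symm hx2b)
      hax1 hbx2 hnab hax2 (fun h => hnbx1 h.symm) hnx1x2))))))
    rw [huniv4]; ext y; simp; tauto

/-! ### stage 3 : γ = 2, r ≥ 2, a isolated -/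

lemma stage3 {S : Set V} (a b x1 x2 x3 : V)
    (hpds : IsPDS 1 G S) (hpd2 : pdNum 1 G = 2)
    (hppt : pptOf 1 G S = ppt 1 G) (hr2 : 2 ≤ ppt 1 G)
    (hn : Fintype.card V = ppt 1 G + 3)
    (hSeq : S = {a, b}) (hab : a ≠ b)
    (hx1S : x1 ∉ S) (hx2S : x2 ∉ S) (hx12 : x1 ≠ x2)
    (hP1 : powerIter 1 G S 1 = {a, b, x1, x2})
    (hx3P1 : x3 ∉ powerIter 1 G S 1)
    (hP2 : powerIter 1 G S 2 = insert x3 (powerIter 1 G S 1))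
    (hfire : G.neighborSet x1 \ powerIter 1 G S 1 = {x3})
    (hNa : G.neighborSet a = ∅)
    (hbx1 : G.Adj b x1) (hbx2 : G.Adj b x2)
    (hNb : G.neighborSet b ⊆ {x1, x2}) : Concl G := by
  classical
  set r := ppt 1 G with hrdef
  have hPr : powerIter 1 G S r = Set.univ := by
    rw [← hppt]; exact hpds.powerIter_pptOf
  have hnaz : ∀ z : V, ¬ G.Adj a z := by
    intro z h
    have : z ∈ G.neighborSet a := h
    rw [hNa] at this
    exact this
  have hadj13 : G.Adj x1 x3 := by
    have : x3 ∈ G.neighborSet x1 \ powerIter 1 G S 1 := by rw [hfire]; exact rfl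
    exact this.1
  have hx1a : x1 ≠ a := fun h => hx1S (by rw [hSeq, h]; simp)
  have hx1b : x1 ≠ b := fun h => hx1S (by rw [hSeq, h]; simp)
  have hx2a : x2 ≠ a := fun h => hx2S (by rw [hSeq, h]; simp)
  have hx2b : x2 ≠ b := fun h => hx2S (by rw [hSeq, h]; simp)
  have hx3a : x3 ≠ a := fun h => hx3P1 (by rw [hP1, h]; simp)
  have hx3b : x3 ≠ b := fun h => hx3P1 (by rw [hP1, h]; simp)
  have hx31 : x3 ≠ x1 := fun h => hx3P1 (by rw [hP1, h]; simp)
  have hx32 : x3 ≠ x2 := fun h => hx3P1 (by rw [hP1, h]; simp)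
  have hNx1 : G.neighborSet x1 ⊆ powerIter 1 G S 2 := by
    intro z hz
    by_cases hzP1 : z ∈ powerIter 1 G S 1
    · exact powerIter_mono_t (by omega) hzP1
    · have : z ∈ G.neighborSet x1 \ powerIter 1 G S 1 := ⟨hz, hzP1⟩
      rw [hfire] at this
      rw [hP2, this]
      exact Set.mem_insert _ _
  have hnbx3 : ¬ G.Adj b x3 := by
    intro h
    have : x3 ∈ ({x1, x2} : Set V) := hNb h
    rcases this with h' | h'
    · exact hx31 h'
    · exact hx32 h'
  have hcontra : ∀ T : Set V, T.ncard = 2 → IsPDS 1 G T → pptOf 1 G T < r → False := by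
    intro T hT hp hlt
    have := ppt_le_pptOf ⟨hp, by rw [hT, hpd2]⟩
    omega
  rcases eq_or_lt_of_le hr2 with hr2' | hr3
  · -- r = 2 : the graph is K1 ⊔ P4 or K1 ⊔ C4
    have hP2univ : powerIter 1 G S 2 = Set.univ := by
      have := hPr; rw [← hr2'] at this; exact this
    have huniv5 : (Set.univ : Set V) = {a, b, x1, x2, x3} := by
      rw [← hP2univ, hP2, hP1]; ext y; simp; tauto
    have hmem5 : ∀ y : V, y = a ∨ y = b ∨ y = x1 ∨ y = x2 ∨ y = x3 := by
      intro y
      have hy : y ∈ ({a, b, x1, x2, x3} : Set V) := by rw [← huniv5]; trivial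
      simpa using hy
    have hnx1x2 : ¬ G.Adj x1 x2 := by
      intro hadj
      refine hcontra {a, x1} (Set.ncard_pair (Ne.symm hx1a))
        ⟨1, Set.eq_univ_iff_forall.mpr fun y => ?_⟩ ?_
      · rcases hmem5 y with hy' | hy' | hy' | hy' | hy' <;> rw [hy']
        · exact subset_powerIter_one (Set.mem_insert _ _)
        · exact mem_powerIter_one_of_adj (by simp) hbx1.symm
        · exact subset_powerIter_one (by simp)
        · exact mem_powerIter_one_of_adj (by simp) hadj
        · exact mem_powerIter_one_of_adj (by simp) hadj13
      · have : pptOf 1 G {a, x1} ≤ 1 := pptOf_le (by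
          refine Set.eq_univ_iff_forall.mpr fun y => ?_
          rcases hmem5 y with hy' | hy' | hy' | hy' | hy' <;> rw [hy']
          · exact subset_powerIter_one (Set.mem_insert _ _)
          · exact mem_powerIter_one_of_adj (by simp) hbx1.symm
          · exact subset_powerIter_one (by simp)
          · exact mem_powerIter_one_of_adj (by simp) hadj
          · exact mem_powerIter_one_of_adj (by simp) hadj13)
        omega
    by_cases hx23 : G.Adj x2 x3
    · refine Or.inr (Or.inr (Or.inr (Or.inr (Or.inr (Or.inl (iso_K1C4 a b x1 x2 x3 huniv5
        hab (Ne.symm hx1a) (Ne.symm hx2a) (Ne.symm hx3a) (Ne.symm hx1b) (Ne.symm hx2b)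
        (Ne.symm hx3b) hx12 (Ne.symm hx31) (Ne.symm hx32)
        hbx1 hbx2 hadj13 hx23
        (hnaz b) (hnaz x1) (hnaz x2) (hnaz x3) hnbx3 hnx1x2))))))
    · refine Or.inr (Or.inr (Or.inr (Or.inr (Or.inl (iso_K1P4 a b x1 x2 x3 huniv5
        hab (Ne.symm hx1a) (Ne.symm hx2a) (Ne.symm hx3a) (Ne.symm hx1b) (Ne.symm hx2b)
        (Ne.symm hx3b) hx12 (Ne.symm hx31) (Ne.symm hx32)
        hbx1 hbx2 hadj13
        (hnaz b) (hnaz x1) (hnaz x2) (hnaz x3) hnbx3 hnx1x2 hx23)))))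
  · -- r ≥ 3 : contradiction
    exfalso
    have huncard : (Set.univ : Set V).ncard = r + 3 := by
      rw [Set.ncard_univ, Nat.card_eq_fintype_card, hn]
    have hP1card : (powerIter 1 G S 1).ncard = 4 := by
      rw [hP1]
      rw [Set.ncard_insert_of_notMem (by simp [hab, hx1a.symm, hx2a.symm]) (Set.toFinite _),
        Set.ncard_insert_of_notMem (by simp [hx1b.symm, hx2b.symm]) (Set.toFinite _),
        Set.ncard_pair hx12]
    have hP2card : (powerIter 1 G S 2).ncard = 5 := by
      rw [hP2, Set.ncard_insert_of_notMem hx3P1 (Set.toFinite _), hP1card]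
    have hP3card : (powerIter 1 G S 3).ncard = 6 := by
      have hub := ncard_powerIter_lower' (k := 1) hpds (show 3 ≤ r by omega) (le_of_eq hppt.symm)
      rw [hPr, huncard] at hub
      have hlb : (powerIter 1 G S 2).ncard < (powerIter 1 G S 3).ncard :=
        Set.ncard_lt_ncard (powerIter_strict_growth hpds (by rw [hppt]; omega)) (Set.toFinite _)
      omega
    obtain ⟨x4, hx4P2, hP3⟩ := exists_new_vertex
      (powerIter_subset_succ (k := 1) (G := G) (S := S) 2) (by rw [hP3card, hP2card])
    obtain ⟨v, hvP2, hvx4, hvcard⟩ := exists_spreader (k := 1) (show 1 ≤ 2 by omega)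
      (by rw [hP3]; exact Set.mem_insert _ _) hx4P2
    have hNfire : G.neighborSet v \ powerIter 1 G S 2 = {x4} :=
      eq_singleton_of_ncard_le_one hvx4 hvcard
    have hx4a : x4 ≠ a := fun h => hx4P2 (by rw [hP2, hP1, h]; simp)
    have hx4b : x4 ≠ b := fun h => hx4P2 (by rw [hP2, hP1, h]; simp)
    have hx41 : x4 ≠ x1 := fun h => hx4P2 (by rw [hP2, hP1, h]; simp)
    have hx42 : x4 ≠ x2 := fun h => hx4P2 (by rw [hP2, hP1, h]; simp)
    have hx43 : x4 ≠ x3 := fun h => hx4P2 (by rw [hP2, h]; simp)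
    have hveq : v = x2 ∨ v = x3 := by
      have hv5 : v ∈ insert x3 ({a, b, x1, x2} : Set V) := by rw [← hP1, ← hP2]; exact hvP2
      rcases hv5 with hv' | hv' | hv' | hv' | hv'
      · exact Or.inr hv'
      · exfalso; rw [hv'] at hvx4; rw [hNa] at hvx4; exact hvx4.1
      · exfalso; rw [hv'] at hvx4
        have : x4 ∈ ({x1, x2} : Set V) := hNb hvx4.1
        rcases this with h' | h'
        · exact hx41 h'
        · exact hx42 h'
      · exfalso; rw [hv'] at hvx4
        exact hvx4.2 (hNx1 hvx4.1)
      · exact Or.inl hv'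
    have hmaxr : (2 : ℕ) ⊔ (r - 1) = r - 1 := max_eq_right (by omega)
    rcases hveq with hv2 | hv3
    · -- v = x2 : T = {a, x2}
      rw [hv2] at hNfire
      have hadj24 : G.Adj x2 x4 := by
        have : x4 ∈ G.neighborSet x2 \ powerIter 1 G S 2 := by rw [hNfire]; exact rfl
        exact this.1
      have hx23 : G.Adj x2 x3 := by
        by_contra hno
        have hsub12 : G.neighborSet x2 \ powerIter 1 G S 1 ⊆ {x4} := by
          intro z hz
          by_cases hz2 : z ∈ powerIter 1 G S 2
          · rw [hP2] at hz2
            rcases hz2 with hz' | hz'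
            · exact absurd (hz' ▸ hz.1) (fun h => hno h)
            · exact absurd hz' hz.2
          · have : z ∈ G.neighborSet x2 \ powerIter 1 G S 2 := ⟨hz.1, hz2⟩
            rw [hNfire] at this
            exact this
        have : x4 ∈ powerIter 1 G S 2 := by
          refine mem_propStep_of rfl le_rfl (by rw [hP1]; simp) hadj24
            (ncard_le_one_of_subset_singleton hsub12)
        exact hx4P2 this
      have hT1 : ∀ y : V, y = a ∨ y = b ∨ y = x2 ∨ y = x3 ∨ y = x4 → y ∈ powerIter 1 G ({a, x2} : Set V) 1 := by
        rintro y (rfl | rfl | rfl | rfl | rfl)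
        · exact subset_powerIter_one (Set.mem_insert _ _)
        · exact mem_powerIter_one_of_adj (by simp) hbx2.symm
        · exact subset_powerIter_one (by simp)
        · exact mem_powerIter_one_of_adj (by simp) hx23
        · exact mem_powerIter_one_of_adj (by simp) hadj24
      have hx1T2 : x1 ∈ powerIter 1 G ({a, x2} : Set V) 2 := by
        refine mem_propStep_of rfl le_rfl (hT1 b (by simp)) hbx1
          (ncard_le_one_of_subset_singleton (x := x1) ?_)
        intro z hz
        have : z ∈ ({x1, x2} : Set V) := hNb hz.1
        rcases this with h' | h'
        · exact h'
        · exact absurd (hT1 x2 (by simp)) (h' ▸ hz.2)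
      have hsub : powerIter 1 G S (2 + 1) ⊆ powerIter 1 G ({a, x2} : Set V) 2 := by
        intro y hy
        rw [hP3, hP2, hP1] at hy
        simp only [Set.mem_insert_iff, Set.mem_singleton_iff] at hy
        rcases hy with h | h | h | h | h | h <;> rw [h]
        · exact powerIter_subset_succ 1 (hT1 x4 (by simp))
        · exact powerIter_subset_succ 1 (hT1 x3 (by simp))
        · exact powerIter_subset_succ 1 (hT1 a (by simp))
        · exact powerIter_subset_succ 1 (hT1 b (by simp))
        · exact hx1T2
        · exact powerIter_subset_succ 1 (hT1 x2 (by simp))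
      obtain ⟨hTpds, hTle⟩ := exchange (T := ({a, x2} : Set V)) hpds (show 1 ≤ 2 by omega) hsub
      rw [hppt, hmaxr] at hTle
      exact hcontra {a, x2} (Set.ncard_pair (Ne.symm hx2a)) hTpds (by omega)
    · -- v = x3
      rw [hv3] at hNfire
      have hadj34 : G.Adj x3 x4 := by
        have : x4 ∈ G.neighborSet x3 \ powerIter 1 G S 2 := by rw [hNfire]; exact rfl
        exact this.1
      have hNx3sub : G.neighborSet x3 ⊆ {x1, x2, x4} := by
        intro z hz
        by_cases hz2 : z ∈ powerIter 1 G S 2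
        · rw [hP2] at hz2
          rcases hz2 with hz' | hz'
          · exact absurd (hz' ▸ hz) (fun h => G.loopless.irrefl x3 h)
          · rw [hP1] at hz'
            rcases hz' with hz'' | hz'' | hz'' | hz''
            · exact absurd (hz'' ▸ hz).symm (hnaz x3)
            · exact absurd (hz'' ▸ hz).symm hnbx3
            · rw [hz'']; simp
            · rw [hz'']; simp
        · have : z ∈ G.neighborSet x3 \ powerIter 1 G S 2 := ⟨hz, hz2⟩
          rw [hNfire] at this
          rw [this]; simp
      by_cases hc : G.Adj x3 x2 ∧ ¬ G.Adj x1 x2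
      · -- T = {a, x3}
        have hT1 : ∀ y : V, y = a ∨ y = x1 ∨ y = x2 ∨ y = x3 ∨ y = x4 → y ∈ powerIter 1 G ({a, x3} : Set V) 1 := by
          rintro y (rfl | rfl | rfl | rfl | rfl)
          · exact subset_powerIter_one (Set.mem_insert _ _)
          · exact mem_powerIter_one_of_adj (by simp) hadj13.symm
          · exact mem_powerIter_one_of_adj (by simp) hc.1
          · exact subset_powerIter_one (by simp)
          · exact mem_powerIter_one_of_adj (by simp) hadj34
        have hbT2 : b ∈ powerIter 1 G ({a, x3} : Set V) 2 := by
          refine mem_propStep_of rfl le_rfl (hT1 x1 (by simp)) hbx1.symm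
            (ncard_le_one_of_subset_singleton (x := b) ?_)
          intro z hz
          have hz2 : z ∈ powerIter 1 G S 2 := hNx1 hz.1
          rw [hP2] at hz2
          rcases hz2 with hz' | hz'
          · exact absurd (hT1 x3 (by simp)) (hz' ▸ hz.2)
          · rw [hP1] at hz'
            rcases hz' with hz'' | hz'' | hz'' | hz''
            · exact absurd (hT1 a (by simp)) (hz'' ▸ hz.2)
            · rw [hz'']; rfl
            · exact absurd ((hz'' ▸ hz.1 : x1 ∈ G.neighborSet x1)) (G.loopless.irrefl x1)
            · exact absurd (hT1 x2 (by simp)) (hz'' ▸ hz.2)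
        have hsub : powerIter 1 G S (2 + 1) ⊆ powerIter 1 G ({a, x3} : Set V) 2 := by
          intro y hy
          rw [hP3, hP2, hP1] at hy
          simp only [Set.mem_insert_iff, Set.mem_singleton_iff] at hy
          rcases hy with h | h | h | h | h | h <;> rw [h]
          · exact powerIter_subset_succ 1 (hT1 x4 (by simp))
          · exact powerIter_subset_succ 1 (hT1 x3 (by simp))
          · exact powerIter_subset_succ 1 (hT1 a (by simp))
          · exact hbT2
          · exact powerIter_subset_succ 1 (hT1 x1 (by simp))
          · exact powerIter_subset_succ 1 (hT1 x2 (by simp))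
        obtain ⟨hTpds, hTle⟩ := exchange (T := ({a, x3} : Set V)) hpds (show 1 ≤ 2 by omega) hsub
        rw [hppt, hmaxr] at hTle
        exact hcontra {a, x3} (Set.ncard_pair (Ne.symm hx3a)) hTpds (by omega)
      · -- T = {a, x1}
        have hT1 : ∀ y : V, y = a ∨ y = b ∨ y = x1 ∨ y = x3 → y ∈ powerIter 1 G ({a, x1} : Set V) 1 := by
          rintro y (rfl | rfl | rfl | rfl)
          · exact subset_powerIter_one (Set.mem_insert _ _)
          · exact mem_powerIter_one_of_adj (by simp) hbx1.symm
          · exact subset_powerIter_one (by simp)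
          · exact mem_powerIter_one_of_adj (by simp) hadj13
        have hx2T1 : G.Adj x1 x2 → x2 ∈ powerIter 1 G ({a, x1} : Set V) 1 := fun h =>
          mem_powerIter_one_of_adj (by simp) h
        have hx2T2 : x2 ∈ powerIter 1 G ({a, x1} : Set V) 2 := by
          refine mem_propStep_of rfl le_rfl (hT1 b (by simp)) hbx2
            (ncard_le_one_of_subset_singleton (x := x2) ?_)
          intro z hz
          have : z ∈ ({x1, x2} : Set V) := hNb hz.1
          rcases this with h' | h'
          · exact absurd (hT1 x1 (by simp)) (h' ▸ hz.2)
          · exact h'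
        have hx4T2 : x4 ∈ powerIter 1 G ({a, x1} : Set V) 2 := by
          refine mem_propStep_of rfl le_rfl (hT1 x3 (by simp)) hadj34
            (ncard_le_one_of_subset_singleton (x := x4) ?_)
          intro z hz
          have : z ∈ ({x1, x2, x4} : Set V) := hNx3sub hz.1
          rcases this with h' | h' | h'
          · exact absurd (hT1 x1 (by simp)) (h' ▸ hz.2)
          · exfalso
            rcases not_and_or.mp hc with hc' | hc'
            · exact hc' (h' ▸ hz.1)
            · exact (h' ▸ hz.2) (hx2T1 (not_not.mp hc'))
          · exact h'
        have hsub : powerIter 1 G S (2 + 1) ⊆ powerIter 1 G ({a, x1} : Set V) 2 := by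
          intro y hy
          rw [hP3, hP2, hP1] at hy
          simp only [Set.mem_insert_iff, Set.mem_singleton_iff] at hy
          rcases hy with h | h | h | h | h | h <;> rw [h]
          · exact hx4T2
          · exact powerIter_subset_succ 1 (hT1 x3 (by simp))
          · exact powerIter_subset_succ 1 (hT1 a (by simp))
          · exact powerIter_subset_succ 1 (hT1 b (by simp))
          · exact powerIter_subset_succ 1 (hT1 x1 (by simp))
          · exact hx2T2
        obtain ⟨hTpds, hTle⟩ := exchange (T := ({a, x1} : Set V)) hpds (show 1 ≤ 2 by omega) hsub
        rw [hppt, hmaxr] at hTle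
        exact hcontra {a, x1} (Set.ncard_pair (Ne.symm hx1a)) hTpds (by omega)

/-! ### stage 2 : γ = 2, r ≥ 2 -/

lemma stage2half {S : Set V} (a b x1 x2 x3 : V)
    (hpds : IsPDS 1 G S) (hpd2 : pdNum 1 G = 2)
    (hppt : pptOf 1 G S = ppt 1 G) (hr2 : 2 ≤ ppt 1 G)
    (hn : Fintype.card V = ppt 1 G + 3)
    (hSeq : S = {a, b}) (hab : a ≠ b)
    (hx1S : x1 ∉ S) (hx2S : x2 ∉ S) (hx12 : x1 ≠ x2)
    (hP1 : powerIter 1 G S 1 = {a, b, x1, x2})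
    (hx3P1 : x3 ∉ powerIter 1 G S 1)
    (hP2 : powerIter 1 G S 2 = insert x3 (powerIter 1 G S 1))
    (hfire : G.neighborSet x1 \ powerIter 1 G S 1 = {x3})
    (hnax1 : ¬ G.Adj a x1) (hnax2 : ¬ G.Adj a x2) : Concl G := by
  classical
  have hx1b : x1 ≠ b := fun h => hx1S (by rw [hSeq, h]; simp)
  have hadj13 : G.Adj x1 x3 := by
    have : x3 ∈ G.neighborSet x1 \ powerIter 1 G S 1 := by rw [hfire]; exact rfl
    exact this.1
  have hnbmem : ∀ y : V, y ∉ S → y ∈ powerIter 1 G S 1 → G.Adj a y ∨ G.Adj b y := by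
    intro y hyS hyP
    rcases mem_closedNbhd_iff.mp (hyP : y ∈ closedNbhd G S) with h | ⟨v, hvS, hadj⟩
    · exact absurd h hyS
    · rw [hSeq] at hvS
      rcases hvS with h' | h'
      · exact Or.inl (h' ▸ hadj)
      · exact Or.inr (h' ▸ hadj)
  have hbx1 : G.Adj b x1 :=
    (hnbmem x1 hx1S (by rw [hP1]; simp)).resolve_left hnax1
  have hbx2 : G.Adj b x2 :=
    (hnbmem x2 hx2S (by rw [hP1]; simp)).resolve_left hnax2
  have hcontra : ∀ T : Set V, T.ncard = 2 → IsPDS 1 G T → pptOf 1 G T < ppt 1 G → False := by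
    intro T hT hp hlt
    have := ppt_le_pptOf ⟨hp, by rw [hT, hpd2]⟩
    omega
  have hmax1 : (1 : ℕ) ⊔ (ppt 1 G - 1) = ppt 1 G - 1 := max_eq_right (by omega)
  by_cases hadjab : G.Adj a b
  · exfalso
    have hsub : powerIter 1 G S (1 + 1) ⊆ powerIter 1 G ({b, x1} : Set V) 1 := by
      intro y hy
      rw [show (1 + 1 : ℕ) = 2 from rfl, hP2, hP1] at hy
      simp only [Set.mem_insert_iff, Set.mem_singleton_iff] at hy
      rcases hy with h | h | h | h | h <;> rw [h]
      · exact mem_powerIter_one_of_adj (by simp) hadj13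
      · exact mem_powerIter_one_of_adj (Set.mem_insert _ _) hadjab.symm
      · exact subset_powerIter_one (Set.mem_insert _ _)
      · exact subset_powerIter_one (by simp)
      · exact mem_powerIter_one_of_adj (Set.mem_insert _ _) hbx2
    obtain ⟨hTpds, hTle⟩ := exchange (T := ({b, x1} : Set V)) hpds le_rfl hsub
    rw [hppt, hmax1] at hTle
    exact hcontra {b, x1} (Set.ncard_pair (Ne.symm hx1b)) hTpds (by omega)
  · have hNa : G.neighborSet a = ∅ := by
      refine Set.eq_empty_iff_forall_notMem.mpr fun z hz => ?_
      have hzP1 : z ∈ powerIter 1 G S 1 := neighborSet_subset_powerIter_one (by rw [hSeq]; simp) hz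
      rw [hP1] at hzP1
      rcases hzP1 with h' | h' | h' | h'
      · exact G.loopless.irrefl a (h' ▸ hz)
      · exact hadjab (h' ▸ hz)
      · exact hnax1 (h' ▸ hz)
      · exact hnax2 (h' ▸ hz)
    have hNb : G.neighborSet b ⊆ {x1, x2} := by
      intro z hz
      have hzP1 : z ∈ powerIter 1 G S 1 := neighborSet_subset_powerIter_one (by rw [hSeq]; simp) hz
      rw [hP1] at hzP1
      rcases hzP1 with h' | h' | h' | h'
      · exact absurd (h' ▸ hz) (fun hh => hadjab hh.symm)
      · exact absurd (h' ▸ hz) (G.loopless.irrefl b)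
      · rw [h']; simp
      · rw [h']; simp
    exact stage3 a b x1 x2 x3 hpds hpd2 hppt hr2 hn hSeq hab hx1S hx2S hx12 hP1 hx3P1 hP2
      hfire hNa hbx1 hbx2 hNb

lemma stage2 {S : Set V} (a b x1 x2 x3 : V)
    (hpds : IsPDS 1 G S) (hpd2 : pdNum 1 G = 2)
    (hppt : pptOf 1 G S = ppt 1 G) (hr2 : 2 ≤ ppt 1 G)
    (hn : Fintype.card V = ppt 1 G + 3)
    (hSeq : S = {a, b}) (hab : a ≠ b)
    (hx1S : x1 ∉ S) (hx2S : x2 ∉ S) (hx12 : x1 ≠ x2)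
    (hP1 : powerIter 1 G S 1 = {a, b, x1, x2})
    (hx3P1 : x3 ∉ powerIter 1 G S 1)
    (hP2 : powerIter 1 G S 2 = insert x3 (powerIter 1 G S 1))
    (hfire : G.neighborSet x1 \ powerIter 1 G S 1 = {x3}) : Concl G := by
  classical
  have hadj13 : G.Adj x1 x3 := by
    have : x3 ∈ G.neighborSet x1 \ powerIter 1 G S 1 := by rw [hfire]; exact rfl
    exact this.1
  have hcontra : ∀ T : Set V, T.ncard = 2 → IsPDS 1 G T → pptOf 1 G T < ppt 1 G → False := by
    intro T hT hp hlt
    have := ppt_le_pptOf ⟨hp, by rw [hT, hpd2]⟩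
    omega
  have hmax1 : (1 : ℕ) ⊔ (ppt 1 G - 1) = ppt 1 G - 1 := max_eq_right (by omega)
  by_cases hax : G.Adj a x1 ∨ G.Adj a x2
  · by_cases hbx : G.Adj b x1 ∨ G.Adj b x2
    · -- both a and b see {x1, x2} : exchange with T = {x1, x2}
      exfalso
      have hmemT : ∀ y : V, (G.Adj y x1 ∨ G.Adj y x2) → y ∈ powerIter 1 G ({x1, x2} : Set V) 1 := by
        rintro y (h | h)
        · exact mem_powerIter_one_of_adj (Set.mem_insert _ _) h.symm
        · exact mem_powerIter_one_of_adj (by simp) h.symm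
      have hsub : powerIter 1 G S (1 + 1) ⊆ powerIter 1 G ({x1, x2} : Set V) 1 := by
        intro y hy
        rw [show (1 + 1 : ℕ) = 2 from rfl, hP2, hP1] at hy
        simp only [Set.mem_insert_iff, Set.mem_singleton_iff] at hy
        rcases hy with h | h | h | h | h <;> rw [h]
        · exact mem_powerIter_one_of_adj (Set.mem_insert _ _) hadj13
        · exact hmemT a hax
        · exact hmemT b hbx
        · exact subset_powerIter_one (Set.mem_insert _ _)
        · exact subset_powerIter_one (by simp)
      obtain ⟨hTpds, hTle⟩ := exchange (T := ({x1, x2} : Set V)) hpds le_rfl hsub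
      rw [hppt, hmax1] at hTle
      exact hcontra {x1, x2} (Set.ncard_pair hx12) hTpds (by omega)
    · -- b sees neither : apply stage2half with roles of a and b swapped
      push_neg at hbx
      refine stage2half b a x1 x2 x3 hpds hpd2 hppt hr2 hn ?_ (Ne.symm hab) hx1S hx2S hx12
        ?_ hx3P1 hP2 hfire hbx.1 hbx.2
      · rw [hSeq, Set.pair_comm]
      · rw [hP1]; ext y; simp; tauto
  · push_neg at hax
    exact stage2half a b x1 x2 x3 hpds hpd2 hppt hr2 hn hSeq hab hx1S hx2S hx12 hP1 hx3P1 hP2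
      hfire hax.1 hax.2

/-! ### The γ = 3 case -/

lemma gamma3_case {S : Set V} (hpds : IsPDS 1 G S) (hS3 : S.ncard = 3)
    (hpd3 : pdNum 1 G = 3) (hppt : pptOf 1 G S = ppt 1 G)
    (hn : Fintype.card V = ppt 1 G + 3) : Concl G := by
  classical
  set r := ppt 1 G with hr
  have hSppt : pptOf 1 G S = r := hppt
  have huncard : (Set.univ : Set V).ncard = r + 3 := by
    rw [Set.ncard_univ, Nat.card_eq_fintype_card, hn]
  have hPr : powerIter 1 G S r = Set.univ := by
    rw [← hSppt]; exact hpds.powerIter_pptOf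
  rcases Nat.eq_zero_or_pos r with hr0 | hrpos
  · -- n = 3, S = univ, no edges
    have hSuniv : S = Set.univ := by rw [← hPr, hr0]; rfl
    have hcard3 : Fintype.card V = 3 := by omega
    have hno : ∀ u v : V, ¬ G.Adj u v := by
      intro u v huv
      have hTpds : IsPDS 1 G (Set.univ \ {v}) := by
        refine ⟨1, Set.eq_univ_iff_forall.mpr fun x => ?_⟩
        by_cases hx : x = v
        · subst hx
          exact mem_closedNbhd_of_adj (v := x) (u := u)
            ⟨Set.mem_univ u, by simp [huv.ne]⟩ huv
        · exact subset_closedNbhd ⟨Set.mem_univ x, by simp [hx]⟩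
      have hle := pdNum_le_of_isPDS hTpds
      rw [Set.ncard_diff_singleton_of_mem (Set.mem_univ v), huncard, hr0] at hle
      omega
    exact Or.inl (iso_bot3 hcard3 hno)
  · -- r ≥ 1
    have hcardub : ∀ t, t ≤ r → (powerIter 1 G S t).ncard + (r - t) ≤ r + 3 := by
      intro t ht
      have := ncard_powerIter_lower' (k := 1) hpds ht (le_of_eq hSppt.symm)
      rw [hPr, huncard] at this
      omega
    have hcardlb : ∀ t, t ≤ r → 3 + t ≤ (powerIter 1 G S t).ncard := by
      intro t ht
      have := ncard_powerIter_lower (k := 1) hpds (hSppt ▸ ht)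
      omega
    have hP1card : (powerIter 1 G S 1).ncard = 4 := by
      have h1 := hcardub 1 hrpos
      have h2 := hcardlb 1 hrpos
      omega
    obtain ⟨x1, hx1S, hP1⟩ := exists_new_vertex
      (powerIter_subset_succ (k := 1) (G := G) (S := S) 0) (by rw [hP1card, show powerIter 1 G S 0 = S from rfl, hS3])
    -- x1 has a neighbor s0 in S
    have hx1mem : x1 ∈ closedNbhd G S := by
      have : x1 ∈ powerIter 1 G S 1 := by rw [hP1]; exact Set.mem_insert _ _
      exact this
    obtain ⟨s0, hs0S, hs0adj⟩ : ∃ v ∈ S, G.Adj v x1 := by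
      rcases mem_closedNbhd_iff.mp hx1mem with h | h
      · exact absurd h hx1S
      · exact h
    have hNSsub : ∀ v ∈ S, G.neighborSet v ⊆ powerIter 1 G S 1 :=
      fun v hv => neighborSet_subset_powerIter_one hv
    rcases Nat.lt_or_ge r 2 with hr1 | hr2
    · -- r = 1 : n = 4 case
      have hr1' : r = 1 := by omega
      have hP1univ : powerIter 1 G S 1 = Set.univ := by have := hPr; rw [hr1'] at this; exact this
      have hx1S' : x1 ∉ S := hx1S
      obtain ⟨s1, s2, hne12, hSdiff⟩ := Set.ncard_eq_two.mp
        (by rw [Set.ncard_diff_singleton_of_mem hs0S, hS3] : (S \ {s0}).ncard = 2)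
      have hs1S : s1 ∈ S := by
        have : s1 ∈ S \ {s0} := by rw [hSdiff]; exact Set.mem_insert _ _
        exact this.1
      have hs2S : s2 ∈ S := by
        have : s2 ∈ S \ {s0} := by rw [hSdiff]; simp
        exact this.1
      have hs01 : s0 ≠ s1 := by
        intro h
        have : s1 ∈ S \ {s0} := by rw [hSdiff]; exact Set.mem_insert _ _
        exact this.2 (by simp [h.symm])
      have hs02 : s0 ≠ s2 := by
        intro h
        have : s2 ∈ S \ {s0} := by rw [hSdiff]; simp
        exact this.2 (by simp [h.symm])
      have hSeq : S = {s0, s1, s2} := by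
        rw [show ({s0, s1, s2} : Set V) = insert s0 {s1, s2} from rfl, ← hSdiff,
          Set.insert_diff_singleton, Set.insert_eq_self.mpr hs0S]
      have hunivlist : (Set.univ : Set V) = {x1, s0, s1, s2} := by
        rw [← hP1univ, hP1, show powerIter 1 G S 0 = S from rfl, hSeq]
      have hxne : x1 ≠ s0 ∧ x1 ≠ s1 ∧ x1 ≠ s2 := by
        refine ⟨?_, ?_, ?_⟩ <;> intro h <;> exact hx1S' (by rw [hSeq, h]; simp)
      have no2pds : ∀ T : Set V, T.ncard = 2 → ¬ IsPDS 1 G T := by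
        intro T hT hp
        have := pdNum_le_of_isPDS hp
        omega
      have hmem4 : ∀ y : V, y = x1 ∨ y = s0 ∨ y = s1 ∨ y = s2 := by
        intro y
        have hy : y ∈ ({x1, s0, s1, s2} : Set V) := by rw [← hunivlist]; trivial
        simpa using hy
      -- (i) s1 and s2 are not adjacent
      have hn12 : ¬ G.Adj s1 s2 := by
        intro hadj
        refine no2pds {s0, s1} (Set.ncard_pair hs01) ⟨1, Set.eq_univ_iff_forall.mpr fun y => ?_⟩
        rcases hmem4 y with rfl | rfl | rfl | rfl
        · exact mem_closedNbhd_of_adj (Set.mem_insert _ _) hs0adj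
        · exact subset_closedNbhd (Set.mem_insert _ _)
        · exact subset_closedNbhd (by simp)
        · exact mem_closedNbhd_of_adj (by simp) hadj
      -- (ii) s0 is not adjacent to s1 nor s2
      have hn0i : ∀ si ∈ S, si ≠ s0 → ¬ G.Adj s0 si := by
        intro si hsiS hsine hadj
        refine no2pds {s1, s2} (Set.ncard_pair hne12) ⟨2, ?_⟩
        have hs0T : s0 ∈ powerIter 1 G {s1, s2} 1 := by
          rcases (by rw [← hSdiff]; exact ⟨hsiS, by simp [hsine]⟩ : si ∈ ({s1, s2} : Set V)) with h | h
          · exact mem_closedNbhd_of_adj (by rw [← h]; exact Set.mem_insert _ _) hadj.symm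
          · exact mem_closedNbhd_of_adj (by rw [← h]; simp) hadj.symm
        have hx1in : x1 ∈ powerIter 1 G {s1, s2} 2 := by
          refine mem_propStep_of rfl le_rfl hs0T hs0adj (ncard_le_one_of_subset_singleton (x := x1) ?_)
          intro y hy
          rcases hmem4 y with rfl | rfl | rfl | rfl
          · rfl
          · exact absurd (G.ne_of_adj hy.1) (by simp)
          · exact absurd (subset_closedNbhd (Set.mem_insert _ _)) (by exact fun h => hy.2 h)
          · exact absurd (subset_closedNbhd (by simp)) (fun h => hy.2 h)
        refine Set.eq_univ_iff_forall.mpr fun y => ?_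
        rcases hmem4 y with rfl | rfl | rfl | rfl
        · exact hx1in
        · exact powerIter_subset_succ 1 hs0T
        · exact powerIter_subset_succ 1 (subset_closedNbhd (Set.mem_insert _ _))
        · exact powerIter_subset_succ 1 (subset_closedNbhd (by simp))
      -- (iii) s1, s2 are not adjacent to x1
      have hnix : ∀ si ∈ S, si ≠ s0 → ¬ G.Adj si x1 := by
        intro si hsiS hsine hadj
        refine no2pds {s1, s2} (Set.ncard_pair hne12) ⟨2, ?_⟩
        have hsiT : si ∈ ({s1, s2} : Set V) := by rw [← hSdiff]; exact ⟨hsiS, by simp [hsine]⟩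
        have hx1T : x1 ∈ powerIter 1 G {s1, s2} 1 := mem_closedNbhd_of_adj hsiT hadj
        have hs0in : s0 ∈ powerIter 1 G {s1, s2} 2 := by
          refine mem_propStep_of rfl le_rfl hx1T hs0adj.symm (ncard_le_one_of_subset_singleton (x := s0) ?_)
          intro y hy
          rcases hmem4 y with rfl | rfl | rfl | rfl
          · exact absurd (G.ne_of_adj hy.1) (by simp)
          · rfl
          · exact absurd (subset_closedNbhd (Set.mem_insert _ _)) (fun h => hy.2 h)
          · exact absurd (subset_closedNbhd (by simp)) (fun h => hy.2 h)
        refine Set.eq_univ_iff_forall.mpr fun y => ?_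
        rcases hmem4 y with rfl | rfl | rfl | rfl
        · exact powerIter_subset_succ 1 hx1T
        · exact hs0in
        · exact powerIter_subset_succ 1 (subset_closedNbhd (Set.mem_insert _ _))
        · exact powerIter_subset_succ 1 (subset_closedNbhd (by simp))
      refine Or.inr (Or.inl (iso_O2K2 s1 s2 s0 x1 ?_ hne12 hs01.symm ?_ hs02.symm ?_
        hs0adj.ne ?_ ?_ ?_ ?_ ?_ ?_))
      · rw [hunivlist]; ext y; simp; tauto
      · exact hxne.2.1.symm
      · exact hxne.2.2.symm
      · exact hs0adj
      · exact hn12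
      · exact fun h => hn0i s1 hs1S hs01.symm h.symm
      · exact hnix s1 hs1S hs01.symm
      · exact fun h => hn0i s2 hs2S hs02.symm h.symm
      · exact hnix s2 hs2S hs02.symm
    · -- r ≥ 2 : contradiction via exchange
      have hP2card : (powerIter 1 G S 2).ncard = 5 := by
        have h1 := hcardub 2 hr2
        have h2 := hcardlb 2 hr2
        omega
      obtain ⟨x2, hx2P1, hP2⟩ := exists_new_vertex
        (powerIter_subset_succ (k := 1) (G := G) (S := S) 1) (by rw [hP2card, hP1card])
      obtain ⟨v, hvP1, hvx2, _⟩ := exists_spreader (k := 1) le_rfl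
        (by rw [hP2]; exact Set.mem_insert _ _) hx2P1
      have hvx1 : v = x1 := by
        rcases Set.mem_insert_iff.mp (hP1 ▸ hvP1) with h | hvS
        · exact h
        · exact absurd (hNSsub v hvS hvx2.1) hvx2.2
      rw [hvx1] at hvx2
      -- exchange with T = insert x1 (S \ {s0})
      set T : Set V := insert x1 (S \ {s0}) with hT
      have hTcard : T.ncard = 3 := by
        have hx1S' : x1 ∉ S := hx1S
        rw [hT, Set.ncard_insert_of_notMem (by simp [hx1S']) (Set.toFinite _),
          Set.ncard_diff_singleton_of_mem hs0S, hS3]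
      have hsub : powerIter 1 G S 2 ⊆ powerIter 1 G T 1 := by
        rw [hP2, hP1]
        intro y hy
        rcases hy with rfl | hy
        · exact mem_closedNbhd_of_adj (Set.mem_insert _ _) (hvx2.1 : G.Adj x1 y)
        · rcases hy with rfl | hyS
          · exact subset_closedNbhd (Set.mem_insert _ _)
          · by_cases hys0 : y = s0
            · subst hys0
              exact mem_closedNbhd_of_adj (Set.mem_insert _ _) hs0adj.symm
            · exact subset_closedNbhd (Set.mem_insert_of_mem _ ⟨hyS, hys0⟩)
      obtain ⟨hTpds, hTle⟩ := exchange (T := T) hpds le_rfl hsub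
      have : r ≤ pptOf 1 G T := ppt_le_pptOf ⟨hTpds, by rw [hTcard, hpd3]⟩
      rw [hSppt] at hTle
      have hmax : (1 : ℕ) ⊔ (r - 1) = r - 1 := max_eq_right (by omega)
      rw [hmax] at hTle
      omega


/-! ### The γ = 2 case -/

lemma gamma2_case {S : Set V} (hpds : IsPDS 1 G S) (hS2 : S.ncard = 2)
    (hpd2 : pdNum 1 G = 2) (hppt : pptOf 1 G S = ppt 1 G)
    (hn : Fintype.card V = ppt 1 G + 3) : Concl G := by
  classical
  set r := ppt 1 G with hrdef
  have hSppt : pptOf 1 G S = r := hppt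
  have huncard : (Set.univ : Set V).ncard = r + 3 := by
    rw [Set.ncard_univ, Nat.card_eq_fintype_card, hn]
  have hPr : powerIter 1 G S r = Set.univ := by
    rw [← hSppt]; exact hpds.powerIter_pptOf
  have hrpos : 1 ≤ r := by
    by_contra hr0
    have hr0' : r = 0 := by omega
    have : powerIter 1 G S 0 = Set.univ := by rw [← hr0']; exact hPr
    have hSuniv : S = Set.univ := this
    rw [hSuniv, huncard] at hS2
    omega
  have hcardub : ∀ t, t ≤ r → (powerIter 1 G S t).ncard + (r - t) ≤ r + 3 := by
    intro t ht
    have := ncard_powerIter_lower' (k := 1) hpds ht (le_of_eq hSppt.symm)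
    rw [hPr, huncard] at this
    omega
  have hcardlb : ∀ t, t ≤ r → 2 + t ≤ (powerIter 1 G S t).ncard := by
    intro t ht
    have := ncard_powerIter_lower (k := 1) hpds (hSppt ▸ ht)
    omega
  obtain ⟨a, b, hab, hSeq⟩ := Set.ncard_eq_two.mp hS2
  have hNSsub : ∀ v ∈ S, G.neighborSet v ⊆ powerIter 1 G S 1 :=
    fun v hv => neighborSet_subset_powerIter_one hv
  have hcontra : ∀ T : Set V, T.ncard = 2 → IsPDS 1 G T → pptOf 1 G T < r → False := by
    intro T hT hp hlt
    have := ppt_le_pptOf ⟨hp, by rw [hT, hpd2]⟩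
    omega
  have hmax1 : 2 ≤ r → (1 : ℕ) ⊔ (r - 1) = r - 1 := fun h => max_eq_right (by omega)
  -- the domination step observes exactly two new vertices
  have hP1card : (powerIter 1 G S 1).ncard = 4 := by
    have h1 := hcardub 1 hrpos
    have h2 := hcardlb 1 hrpos
    by_contra hne
    have hP1card3 : (powerIter 1 G S 1).ncard = 3 := by omega
    have hr2 : 2 ≤ r := by
      by_contra hr1
      have hr1' : r = 1 := by omega
      have : powerIter 1 G S 1 = Set.univ := by
        have h := hPr; rw [hr1'] at h; exact h
      rw [this, huncard] at hP1card3
      omega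
    obtain ⟨x1, hx1S, hP1⟩ := exists_new_vertex
      (powerIter_subset_succ (k := 1) (G := G) (S := S) 0)
      (by rw [hP1card3, show powerIter 1 G S 0 = S from rfl, hS2])
    have hx1S' : x1 ∉ S := hx1S
    have hx1mem : x1 ∈ closedNbhd G S := by
      have : x1 ∈ powerIter 1 G S 1 := by rw [hP1]; exact Set.mem_insert _ _
      exact this
    obtain ⟨s0, hs0S, hs0adj⟩ : ∃ v ∈ S, G.Adj v x1 := by
      rcases mem_closedNbhd_iff.mp hx1mem with h | h
      · exact absurd h hx1S'
      · exact h
    obtain ⟨s1, hs1S, hs01, hSpair⟩ : ∃ s1, s1 ∈ S ∧ s0 ≠ s1 ∧ S = {s0, s1} := by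
      rw [hSeq] at hs0S
      rcases hs0S with h' | h'
      · exact ⟨b, by rw [hSeq]; simp, h' ▸ hab, by rw [hSeq, h']⟩
      · exact ⟨a, by rw [hSeq]; simp, h' ▸ (Ne.symm hab), by rw [hSeq, h', Set.pair_comm]⟩
    have hsub : powerIter 1 G S (1 + 1) ⊆ powerIter 1 G ({s1, x1} : Set V) 1 := by
      intro y hy
      rw [powerIter_succ 1 le_rfl] at hy
      rcases hy with hy | ⟨v, hvP1, hvy, _⟩
      · rw [hP1, hSpair] at hy
        rcases hy with h' | h' | h' <;> rw [h']
        · exact subset_powerIter_one (by simp)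
        · exact mem_powerIter_one_of_adj (by simp) hs0adj.symm
        · exact subset_powerIter_one (Set.mem_insert _ _)
      · have hvx1 : v = x1 := by
          rcases Set.mem_insert_iff.mp (hP1 ▸ hvP1) with h | hvS
          · exact h
          · exact absurd (hNSsub v hvS hvy.1) hvy.2
        rw [hvx1] at hvy
        exact mem_powerIter_one_of_adj (by simp) hvy.1
    obtain ⟨hTpds, hTle⟩ := exchange (T := ({s1, x1} : Set V)) hpds le_rfl hsub
    rw [hSppt, hmax1 hr2] at hTle
    have hs1x1 : s1 ≠ x1 := fun h => hx1S' (h ▸ hs1S)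
    exact hcontra {s1, x1} (Set.ncard_pair hs1x1) hTpds (by omega)
  -- name the two new vertices x1 x2
  have hdiffcard : ((powerIter 1 G S 1) \ S).ncard = 2 := by
    rw [Set.ncard_diff (show S ⊆ powerIter 1 G S 1 from powerIter_subset_succ 0)
      (Set.toFinite _), hP1card, hS2]
  obtain ⟨x1, x2, hx12, hdiff⟩ := Set.ncard_eq_two.mp hdiffcard
  have hx1S : x1 ∉ S := by
    have : x1 ∈ powerIter 1 G S 1 \ S := by rw [hdiff]; exact Set.mem_insert _ _
    exact this.2
  have hx2S : x2 ∉ S := by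
    have : x2 ∈ powerIter 1 G S 1 \ S := by rw [hdiff]; simp
    exact this.2
  have hP1eq : powerIter 1 G S 1 = {a, b, x1, x2} := by
    have h1 : (powerIter 1 G S 1) = S ∪ (powerIter 1 G S 1 \ S) :=
      (Set.union_diff_cancel (show S ⊆ powerIter 1 G S 1 from powerIter_subset_succ 0)).symm
    rw [h1, hdiff, hSeq]
    ext y; simp; tauto
  rcases eq_or_lt_of_le hrpos with hr1 | hr2
  · -- r = 1 : four vertices
    have hP1univ : powerIter 1 G S 1 = Set.univ := by
      have h := hPr; rw [← hr1] at h; exact h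
    have huniv4 : (Set.univ : Set V) = {a, b, x1, x2} := by rw [← hP1univ, hP1eq]
    have no1pds : ∀ v : V, ¬ IsPDS 1 G {v} := by
      intro v hp
      have := pdNum_le_of_isPDS hp
      rw [Set.ncard_singleton] at this
      omega
    have hx1a : x1 ≠ a := fun h => hx1S (by rw [hSeq, h]; simp)
    have hx1b : x1 ≠ b := fun h => hx1S (by rw [hSeq, h]; simp)
    have hx2a : x2 ≠ a := fun h => hx2S (by rw [hSeq, h]; simp)
    have hx2b : x2 ≠ b := fun h => hx2S (by rw [hSeq, h]; simp)
    have hnbmem : ∀ y : V, y ∉ S → y ∈ powerIter 1 G S 1 → G.Adj a y ∨ G.Adj b y := by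
      intro y hyS hyP
      rcases mem_closedNbhd_iff.mp (hyP : y ∈ closedNbhd G S) with h | ⟨v, hvS, hadj⟩
      · exact absurd h hyS
      · rw [hSeq] at hvS
        rcases hvS with h' | h'
        · exact Or.inl (h' ▸ hadj)
        · exact Or.inr (h' ▸ hadj)
    have hx1nb := hnbmem x1 hx1S (by rw [hP1eq]; simp)
    have hx2nb := hnbmem x2 hx2S (by rw [hP1eq]; simp)
    rcases hx1nb with hax1 | hbx1
    · exact n4g2 a b x1 x2 huniv4 hab hx1a hx1b hx2a hx2b hx12 no1pds hx2nb hax1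
    · refine n4g2 b a x1 x2 ?_ (Ne.symm hab) hx1b hx1a hx2b hx2a hx12 no1pds
        (hx2nb.elim Or.inr Or.inl) hbx1
      rw [huniv4]; ext y; simp; tauto
  · -- r ≥ 2
    have hP2card : (powerIter 1 G S 2).ncard = 5 := by
      have h1 := hcardub 2 hr2
      have h2 : (powerIter 1 G S 1).ncard < (powerIter 1 G S 2).ncard :=
        Set.ncard_lt_ncard (powerIter_strict_growth hpds (by rw [hSppt]; omega)) (Set.toFinite _)
      omega
    obtain ⟨x3, hx3P1, hP2⟩ := exists_new_vertex
      (powerIter_subset_succ (k := 1) (G := G) (S := S) 1) (by rw [hP2card, hP1card])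
    obtain ⟨v, hvP1, hvx3, hvcard⟩ := exists_spreader (k := 1) le_rfl
      (by rw [hP2]; exact Set.mem_insert _ _) hx3P1
    have hNfire : G.neighborSet v \ powerIter 1 G S 1 = {x3} :=
      eq_singleton_of_ncard_le_one hvx3 hvcard
    have hvS : v ∉ S := fun hv => absurd (hNSsub v hv hvx3.1) hvx3.2
    have hv12 : v = x1 ∨ v = x2 := by
      have : v ∈ powerIter 1 G S 1 \ S := ⟨hvP1, hvS⟩
      rw [hdiff] at this
      simpa using this
    rcases hv12 with hv' | hv'
    · rw [hv'] at hNfire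
      exact stage2 a b x1 x2 x3 hpds hpd2 hppt hr2 hn hSeq hab hx1S hx2S hx12 hP1eq hx3P1
        hP2 hNfire
    · rw [hv'] at hNfire
      refine stage2 a b x2 x1 x3 hpds hpd2 hppt hr2 hn hSeq hab hx2S hx1S (Ne.symm hx12) ?_
        hx3P1 hP2 hNfire
      rw [hP1eq]; ext y; simp; tauto

end PowerProp

open SimpleGraph PowerProp in
/-- If `ppt(G) = |G| - 3` and `γ_P(G) ∈ {2,3}`, then `G` is one of the listed graphs. -/
theorem ppt_eq_card_sub_three_of_pdNum {V : Type*} [Fintype V]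
    (G : SimpleGraph V)
    (h : (ppt 1 G : ℤ) = (Fintype.card V : ℤ) - 3)
    (hγ : pdNum 1 G = 2 ∨ pdNum 1 G = 3) :
    Nonempty (G ≃g (⊥ : SimpleGraph (Fin 3))) ∨
    Nonempty (G ≃g (⊥ : SimpleGraph (Fin 2)) ⊕g completeGraph (Fin 2)) ∨
    Nonempty (G ≃g completeGraph (Fin 1) ⊕g cycleGraph 3) ∨
    Nonempty (G ≃g completeGraph (Fin 1) ⊕g pathGraph 3) ∨
    Nonempty (G ≃g completeGraph (Fin 1) ⊕g pathGraph 4) ∨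
    Nonempty (G ≃g completeGraph (Fin 1) ⊕g cycleGraph 4) ∨
    Nonempty (G ≃g completeGraph (Fin 2) ⊕g completeGraph (Fin 2)) := by
  classical
  have hn : Fintype.card V = ppt 1 G + 3 := by omega
  obtain ⟨S, ⟨hpds, hScard⟩, hppt⟩ := exists_minPDS_ppt (k := 1) (G := G)
  have hC : Concl G := by
    rcases hγ with h2 | h3
    · exact gamma2_case hpds (by rw [hScard, h2]) h2 hppt hn
    · exact gamma3_case hpds (by rw [hScard, h3]) h3 hppt hn
  exact hC
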